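/- For every integer d ≥ 2 and constants c₁, c₂, A > 0 there is a constant C > 0 such that the following holds for every finite field 𝔽_q with nontrivial additive character χ: if V ⊆ 𝔽_q^d satisfies c₁·q^{d−1} ≤ |V| ≤ c₂·q^{d−1} and |{(x,y) ∈ V × V : x + y = ξ}| ≤ A·q^{d−2} for every ξ ∈ 𝔽_q^d ∖ {0}, then for every function f : V → ℂ one has the L²–L⁴ extension estimate ( Σ_{m∈𝔽_q^d} | |V|^{−1} Σ_{x∈V} χ(m·x) f(x) |⁴ )^{1/4} ≤ C · ( |V|^{−1} Σ_{x∈V} |f(x)|² )^{1/2}. -/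

import Mathlib

set_option maxHeartbeats 1000000

open Finset

private lemma addChar_map_sum {F M ι : Type*} [AddCommMonoid F] [CommMonoid M]
    (χ : AddChar F M) (s : Finset ι) (g : ι → F) :
    χ (∑ i ∈ s, g i) = ∏ i ∈ s, χ (g i) := by
  induction s using Finset.cons_induction with
  | empty => simp
  | cons a s ha ih => rw [Finset.sum_cons, Finset.prod_cons, AddChar.map_add_eq_mul, ih]

private lemma orth_vec {d : ℕ} {F : Type} [Field F] [Fintype F] [DecidableEq F]
    {χ : AddChar F ℂ} (hχ : χ ≠ 1) (x : Fin d → F) :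
    ∑ m : Fin d → F, χ (∑ i, m i * x i) = if x = 0 then ((Fintype.card F : ℂ) ^ d) else 0 := by
  have hprim := AddChar.IsPrimitive.of_ne_one hχ
  calc ∑ m : Fin d → F, χ (∑ i, m i * x i)
      = ∑ m : Fin d → F, ∏ i, χ (m i * x i) := by
        exact Fintype.sum_congr _ _ fun m => addChar_map_sum χ _ _
    _ = ∏ i, ∑ t : F, χ (t * x i) := (Fintype.prod_sum (κ := fun _ : Fin d => F) fun i t => χ (t * x i)).symm
    _ = ∏ i : Fin d, (if x i = 0 then (Fintype.card F : ℂ) else 0) := by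
        refine Finset.prod_congr rfl fun i _ => ?_
        rw [AddChar.sum_mulShift (x i) hprim]
        split_ifs <;> simp
    _ = if x = 0 then ((Fintype.card F : ℂ) ^ d) else 0 := by
        by_cases hx : x = 0
        · simp [hx, Finset.prod_const, Finset.card_univ]
        · obtain ⟨i, hi⟩ : ∃ i, x i ≠ 0 := by
            by_contra h
            push_neg at h
            exact hx (funext h)
          rw [if_neg hx]
          exact Finset.prod_eq_zero (Finset.mem_univ i) (by rw [if_neg hi])

private lemma plancherel {d : ℕ} {F : Type} [Field F] [Fintype F] [DecidableEq F]
    {χ : AddChar F ℂ} (hχ : χ ≠ 1) (G : (Fin d → F) → ℂ) :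
    ∑ m : Fin d → F, Complex.normSq (∑ ξ : Fin d → F, χ (∑ i, m i * ξ i) * G ξ)
      = (Fintype.card F : ℝ) ^ d * ∑ ξ : Fin d → F, Complex.normSq (G ξ) := by
  have hconj : ∀ a : F, (starRingEnd ℂ) (χ a) = χ (-a) := fun a =>
    (AddChar.map_neg_eq_conj χ a).symm
  have key : ∀ m : Fin d → F,
      ((∑ ξ : Fin d → F, χ (∑ i, m i * ξ i) * G ξ) *
        (starRingEnd ℂ) (∑ ξ : Fin d → F, χ (∑ i, m i * ξ i) * G ξ))
        = ∑ ξ : Fin d → F, ∑ η : Fin d → F,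
            χ (∑ i, m i * (ξ - η) i) * (G ξ * (starRingEnd ℂ) (G η)) := by
    intro m
    rw [map_sum, Finset.sum_mul_sum]
    refine Finset.sum_congr rfl fun ξ _ => Finset.sum_congr rfl fun η _ => ?_
    rw [map_mul, hconj]
    have h1 : χ (∑ i, m i * ξ i) * χ (-(∑ i, m i * η i)) = χ (∑ i, m i * (ξ - η) i) := by
      rw [← AddChar.map_add_eq_mul]
      congr 1
      rw [← sub_eq_add_neg]
      simp [Pi.sub_apply, mul_sub, Finset.sum_sub_distrib]
    rw [mul_mul_mul_comm, h1]
  have hsum : ∑ m : Fin d → F,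
      ((∑ ξ : Fin d → F, χ (∑ i, m i * ξ i) * G ξ) *
        (starRingEnd ℂ) (∑ ξ : Fin d → F, χ (∑ i, m i * ξ i) * G ξ))
      = (Fintype.card F : ℂ) ^ d * ∑ ξ : Fin d → F, G ξ * (starRingEnd ℂ) (G ξ) := by
    calc ∑ m : Fin d → F, ((∑ ξ : Fin d → F, χ (∑ i, m i * ξ i) * G ξ) *
            (starRingEnd ℂ) (∑ ξ : Fin d → F, χ (∑ i, m i * ξ i) * G ξ))
        = ∑ m : Fin d → F, ∑ ξ : Fin d → F, ∑ η : Fin d → F,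
            χ (∑ i, m i * (ξ - η) i) * (G ξ * (starRingEnd ℂ) (G η)) :=
          Finset.sum_congr rfl fun m _ => key m
      _ = ∑ ξ : Fin d → F, ∑ m : Fin d → F, ∑ η : Fin d → F,
            χ (∑ i, m i * (ξ - η) i) * (G ξ * (starRingEnd ℂ) (G η)) := Finset.sum_comm
      _ = ∑ ξ : Fin d → F, ∑ η : Fin d → F, ∑ m : Fin d → F,
            χ (∑ i, m i * (ξ - η) i) * (G ξ * (starRingEnd ℂ) (G η)) :=
          Finset.sum_congr rfl fun ξ _ => Finset.sum_comm
      _ = ∑ ξ : Fin d → F, ∑ η : Fin d → F,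
            (if ξ - η = 0 then ((Fintype.card F : ℂ) ^ d) else 0) *
              (G ξ * (starRingEnd ℂ) (G η)) := by
          refine Finset.sum_congr rfl fun ξ _ => Finset.sum_congr rfl fun η _ => ?_
          rw [← Finset.sum_mul, orth_vec hχ (ξ - η)]
      _ = ∑ ξ : Fin d → F, (Fintype.card F : ℂ) ^ d * (G ξ * (starRingEnd ℂ) (G ξ)) := by
          refine Finset.sum_congr rfl fun ξ _ => ?_
          rw [Finset.sum_eq_single ξ]
          · simp
          · intro η _ hη
            rw [if_neg (sub_ne_zero_of_ne (Ne.symm hη)), zero_mul]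
          · intro h; exact absurd (Finset.mem_univ ξ) h
      _ = (Fintype.card F : ℂ) ^ d * ∑ ξ : Fin d → F, G ξ * (starRingEnd ℂ) (G ξ) :=
          (Finset.mul_sum _ _ _).symm
  simp_rw [Complex.mul_conj] at hsum
  exact_mod_cast hsum

/-- For every `d ≥ 2` and constants `c₁, c₂, A > 0` there is `C > 0` such that
for every finite field `𝔽_q` with nontrivial additive character `χ`: if `V ⊆ 𝔽_q^d` satisfies
`c₁·q^{d−1} ≤ |V| ≤ c₂·q^{d−1}` and `|{(x,y) ∈ V × V : x + y = ξ}| ≤ A·q^{d−2}` for every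
`ξ ≠ 0`, then for every `f : V → ℂ` one has the `L²–L⁴` extension estimate
`‖(f dσ)^∨‖_{L⁴(𝔽_q^d,dm)} ≤ C ‖f‖_{L²(V,dσ)}`. -/
theorem stmt_5 (d : ℕ) (hd : 2 ≤ d) (c₁ c₂ A : ℝ) (hc₁ : 0 < c₁) (hc₂ : 0 < c₂)
    (hA : 0 < A) :
    ∃ C : ℝ, 0 < C ∧
      ∀ (F : Type) [Field F] [Fintype F] [DecidableEq F] (χ : AddChar F ℂ), χ ≠ 1 →
        ∀ V : Finset (Fin d → F),
          c₁ * (Fintype.card F : ℝ) ^ (d - 1) ≤ V.card →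
          (V.card : ℝ) ≤ c₂ * (Fintype.card F : ℝ) ^ (d - 1) →
          (∀ ξ : Fin d → F, ξ ≠ 0 →
            (((V ×ˢ V).filter (fun p => p.1 + p.2 = ξ)).card : ℝ)
              ≤ A * (Fintype.card F : ℝ) ^ (d - 2)) →
          ∀ f : (Fin d → F) → ℂ,
            (∑ m : Fin d → F,
                ‖(V.card : ℂ)⁻¹ * ∑ x ∈ V, χ (∑ i, m i * x i) * f x‖ ^ 4)
                ^ ((1 : ℝ) / 4)
              ≤ C * ((V.card : ℝ)⁻¹ * ∑ x ∈ V, ‖f x‖ ^ 2) ^ ((1 : ℝ) / 2) := by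
  have h1A : (0:ℝ) < (1 + A) / c₁ ^ 2 := by positivity
  refine ⟨((1 + A) / c₁ ^ 2) ^ ((1:ℝ)/4), Real.rpow_pos_of_pos h1A _, ?_⟩
  intro F _ _ _ χ hχ V hV1 hV2 hVcount f
  have hq1 : (1:ℝ) ≤ (Fintype.card F : ℝ) := by exact_mod_cast Fintype.card_pos
  have hQpos : (0:ℝ) < (Fintype.card F : ℝ) ^ (d-1) := by positivity
  have hv : (0:ℝ) < (V.card : ℝ) := lt_of_lt_of_le (by positivity) hV1
  set v : ℝ := (V.card : ℝ) with hvdef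
  set S : ℝ := ∑ x ∈ V, ‖f x‖ ^ 2 with hSdef
  have hSnn : 0 ≤ S := Finset.sum_nonneg fun x _ => by positivity
  set G : (Fin d → F) → ℂ :=
    fun ξ => ∑ p ∈ (V ×ˢ V).filter (fun p => p.1 + p.2 = ξ), f p.1 * f p.2 with hGdef
  -- Step A : square of the extension is the transform of the convolution
  have stepA : ∀ m : Fin d → F, (∑ x ∈ V, χ (∑ i, m i * x i) * f x) ^ 2
      = ∑ ξ : Fin d → F, χ (∑ i, m i * ξ i) * G ξ := by
    intro m
    rw [sq, Finset.sum_mul_sum]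
    calc ∑ x ∈ V, ∑ y ∈ V, (χ (∑ i, m i * x i) * f x) * (χ (∑ i, m i * y i) * f y)
        = ∑ p ∈ V ×ˢ V, χ (∑ i, m i * (p.1 + p.2) i) * (f p.1 * f p.2) := by
          rw [Finset.sum_product]
          refine Finset.sum_congr rfl fun x _ => Finset.sum_congr rfl fun y _ => ?_
          rw [mul_mul_mul_comm, ← AddChar.map_add_eq_mul]
          congr 2
          simp [Pi.add_apply, mul_add, Finset.sum_add_distrib]
      _ = ∑ ξ : Fin d → F, ∑ p ∈ (V ×ˢ V).filter (fun p => p.1 + p.2 = ξ),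
            χ (∑ i, m i * (p.1 + p.2) i) * (f p.1 * f p.2) := by
          have := Finset.sum_fiberwise_eq_sum_filter (V ×ˢ V)
            (Finset.univ : Finset (Fin d → F)) (fun p => p.1 + p.2)
            (fun p => χ (∑ i, m i * (p.1 + p.2) i) * (f p.1 * f p.2))
          simp only [Finset.mem_univ, Finset.filter_true] at this
          rw [← this]
      _ = ∑ ξ : Fin d → F, χ (∑ i, m i * ξ i) * G ξ := by
          refine Finset.sum_congr rfl fun ξ _ => ?_
          rw [hGdef, Finset.mul_sum]
          refine Finset.sum_congr rfl fun p hp => ?_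
          rw [(Finset.mem_filter.mp hp).2]
  -- pointwise rewrite of the fourth power
  have habs : ∀ m : Fin d → F,
      ‖(V.card : ℂ)⁻¹ * ∑ x ∈ V, χ (∑ i, m i * x i) * f x‖ ^ 4
        = v⁻¹ ^ 4 * Complex.normSq ((∑ x ∈ V, χ (∑ i, m i * x i) * f x) ^ 2) := by
    intro m
    rw [norm_mul, norm_inv, Complex.norm_natCast, mul_pow]
    congr 1
    rw [map_pow, ← Complex.sq_norm]
    ring
  have hXeq : (∑ m : Fin d → F,
      ‖(V.card : ℂ)⁻¹ * ∑ x ∈ V, χ (∑ i, m i * x i) * f x‖ ^ 4)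
      = v⁻¹ ^ 4 * ((Fintype.card F : ℝ) ^ d * ∑ ξ : Fin d → F, Complex.normSq (G ξ)) := by
    calc (∑ m : Fin d → F,
        ‖(V.card : ℂ)⁻¹ * ∑ x ∈ V, χ (∑ i, m i * x i) * f x‖ ^ 4)
        = ∑ m : Fin d → F,
            v⁻¹ ^ 4 * Complex.normSq ((∑ x ∈ V, χ (∑ i, m i * x i) * f x) ^ 2) :=
          Finset.sum_congr rfl fun m _ => habs m
      _ = v⁻¹ ^ 4 * ∑ m : Fin d → F,
            Complex.normSq ((∑ x ∈ V, χ (∑ i, m i * x i) * f x) ^ 2) :=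
          (Finset.mul_sum _ _ _).symm
      _ = v⁻¹ ^ 4 * ∑ m : Fin d → F,
            Complex.normSq (∑ ξ : Fin d → F, χ (∑ i, m i * ξ i) * G ξ) := by
          congr 1
          exact Finset.sum_congr rfl fun m _ => by rw [stepA m]
      _ = v⁻¹ ^ 4 * ((Fintype.card F : ℝ) ^ d * ∑ ξ : Fin d → F, Complex.normSq (G ξ)) := by
          rw [plancherel hχ G]
  -- zero fiber bound
  have hG0 : Complex.normSq (G 0) ≤ S ^ 2 := by
    have hfst : ∑ p ∈ (V ×ˢ V).filter (fun p => p.1 + p.2 = 0),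
        ‖f p.1‖ ^ 2 ≤ S := by
      have hinj : ∀ p ∈ (V ×ˢ V).filter (fun p => p.1 + p.2 = 0),
          ∀ r ∈ (V ×ˢ V).filter (fun p => p.1 + p.2 = 0), p.1 = r.1 → p = r := by
        intro p hp r hr h
        have hp2 := (Finset.mem_filter.mp hp).2
        have hr2 := (Finset.mem_filter.mp hr).2
        have h2 : p.2 = r.2 := by
          have e1 : p.2 = -p.1 := eq_neg_of_add_eq_zero_right hp2
          have e2 : r.2 = -r.1 := eq_neg_of_add_eq_zero_right hr2
          rw [e1, e2, h]
        exact Prod.ext h h2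
      have him : ∑ x ∈ ((V ×ˢ V).filter (fun p => p.1 + p.2 = 0)).image Prod.fst,
          ‖f x‖ ^ 2
          = ∑ p ∈ (V ×ˢ V).filter (fun p => p.1 + p.2 = 0), ‖f p.1‖ ^ 2 :=
        Finset.sum_image hinj
      calc ∑ p ∈ (V ×ˢ V).filter (fun p => p.1 + p.2 = 0), ‖f p.1‖ ^ 2
          = ∑ x ∈ ((V ×ˢ V).filter (fun p => p.1 + p.2 = 0)).image Prod.fst,
              ‖f x‖ ^ 2 := him.symm
        _ ≤ S := by
            rw [hSdef]
            refine Finset.sum_le_sum_of_subset_of_nonneg ?_ (fun x _ _ => by positivity)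
            intro x hx
            obtain ⟨p, hp, rfl⟩ := Finset.mem_image.mp hx
            exact (Finset.mem_product.mp (Finset.mem_filter.mp hp).1).1
    have hsnd : ∑ p ∈ (V ×ˢ V).filter (fun p => p.1 + p.2 = 0),
        ‖f p.2‖ ^ 2 ≤ S := by
      have hinj : ∀ p ∈ (V ×ˢ V).filter (fun p => p.1 + p.2 = 0),
          ∀ r ∈ (V ×ˢ V).filter (fun p => p.1 + p.2 = 0), p.2 = r.2 → p = r := by
        intro p hp r hr h
        have hp2 := (Finset.mem_filter.mp hp).2
        have hr2 := (Finset.mem_filter.mp hr).2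
        have h1 : p.1 = r.1 := by
          have e1 : p.1 = -p.2 := eq_neg_of_add_eq_zero_left hp2
          have e2 : r.1 = -r.2 := eq_neg_of_add_eq_zero_left hr2
          rw [e1, e2, h]
        exact Prod.ext h1 h
      have him : ∑ x ∈ ((V ×ˢ V).filter (fun p => p.1 + p.2 = 0)).image Prod.snd,
          ‖f x‖ ^ 2
          = ∑ p ∈ (V ×ˢ V).filter (fun p => p.1 + p.2 = 0), ‖f p.2‖ ^ 2 :=
        Finset.sum_image hinj
      calc ∑ p ∈ (V ×ˢ V).filter (fun p => p.1 + p.2 = 0), ‖f p.2‖ ^ 2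
          = ∑ x ∈ ((V ×ˢ V).filter (fun p => p.1 + p.2 = 0)).image Prod.snd,
              ‖f x‖ ^ 2 := him.symm
        _ ≤ S := by
            rw [hSdef]
            refine Finset.sum_le_sum_of_subset_of_nonneg ?_ (fun x _ _ => by positivity)
            intro x hx
            obtain ⟨p, hp, rfl⟩ := Finset.mem_image.mp hx
            exact (Finset.mem_product.mp (Finset.mem_filter.mp hp).1).2
    have habsG0 : ‖G 0‖ ≤ S := by
      calc ‖G 0‖
          ≤ ∑ p ∈ (V ×ˢ V).filter (fun p => p.1 + p.2 = 0),
              ‖f p.1 * f p.2‖ := norm_sum_le _ _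
        _ = ∑ p ∈ (V ×ˢ V).filter (fun p => p.1 + p.2 = 0),
              ‖f p.1‖ * ‖f p.2‖ :=
            Finset.sum_congr rfl fun p _ => norm_mul _ _
        _ ≤ ∑ p ∈ (V ×ˢ V).filter (fun p => p.1 + p.2 = 0),
              (‖f p.1‖ ^ 2 + ‖f p.2‖ ^ 2) / 2 :=
            Finset.sum_le_sum fun p _ => by
              nlinarith [sq_nonneg (‖f p.1‖ - ‖f p.2‖)]
        _ = ((∑ p ∈ (V ×ˢ V).filter (fun p => p.1 + p.2 = 0), ‖f p.1‖ ^ 2)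
              + ∑ p ∈ (V ×ˢ V).filter (fun p => p.1 + p.2 = 0), ‖f p.2‖ ^ 2) / 2 := by
            rw [← Finset.sum_div, Finset.sum_add_distrib]
        _ ≤ (S + S) / 2 := by
            have := add_le_add hfst hsnd
            linarith
        _ = S := by ring
    calc Complex.normSq (G 0) = ‖G 0‖ ^ 2 := (Complex.sq_norm _).symm
      _ ≤ S ^ 2 := by nlinarith [norm_nonneg (G 0)]
  -- Cauchy-Schwarz on each fiber
  have hCS : ∀ ξ : Fin d → F, Complex.normSq (G ξ)
      ≤ (((V ×ˢ V).filter (fun p => p.1 + p.2 = ξ)).card : ℝ) *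
        ∑ p ∈ (V ×ˢ V).filter (fun p => p.1 + p.2 = ξ),
          ‖f p.1‖ ^ 2 * ‖f p.2‖ ^ 2 := by
    intro ξ
    rw [← Complex.sq_norm]
    calc ‖G ξ‖ ^ 2
        ≤ (∑ p ∈ (V ×ˢ V).filter (fun p => p.1 + p.2 = ξ),
            ‖f p.1 * f p.2‖) ^ 2 := by
          have h1 : ‖G ξ‖ ≤ ∑ p ∈ (V ×ˢ V).filter (fun p => p.1 + p.2 = ξ),
              ‖f p.1 * f p.2‖ := norm_sum_le _ _
          exact pow_le_pow_left₀ (norm_nonneg _) h1 2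
      _ ≤ (((V ×ˢ V).filter (fun p => p.1 + p.2 = ξ)).card : ℝ) *
            ∑ p ∈ (V ×ˢ V).filter (fun p => p.1 + p.2 = ξ),
              ‖f p.1 * f p.2‖ ^ 2 := by
          exact_mod_cast sq_sum_le_card_mul_sum_sq
            (s := (V ×ˢ V).filter (fun p => p.1 + p.2 = ξ))
            (f := fun p => ‖f p.1 * f p.2‖)
      _ = (((V ×ˢ V).filter (fun p => p.1 + p.2 = ξ)).card : ℝ) *
            ∑ p ∈ (V ×ˢ V).filter (fun p => p.1 + p.2 = ξ),
              ‖f p.1‖ ^ 2 * ‖f p.2‖ ^ 2 := by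
          congr 1
          exact Finset.sum_congr rfl fun p _ => by rw [norm_mul, mul_pow]
  -- total mass of the fibers
  have htot : ∑ ξ : Fin d → F, ∑ p ∈ (V ×ˢ V).filter (fun p => p.1 + p.2 = ξ),
      ‖f p.1‖ ^ 2 * ‖f p.2‖ ^ 2 = S ^ 2 := by
    have hfib := Finset.sum_fiberwise_eq_sum_filter (V ×ˢ V)
      (Finset.univ : Finset (Fin d → F)) (fun p => p.1 + p.2)
      (fun p => ‖f p.1‖ ^ 2 * ‖f p.2‖ ^ 2)
    simp only [Finset.mem_univ, Finset.filter_true] at hfib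
    rw [hfib, Finset.sum_product, hSdef, sq, Finset.sum_mul_sum]
  -- the main counting bound
  have hC : ∑ ξ : Fin d → F, Complex.normSq (G ξ)
      ≤ (1 + A) * (Fintype.card F : ℝ) ^ (d - 2) * S ^ 2 := by
    have hsplit : ∑ ξ : Fin d → F, Complex.normSq (G ξ)
        = Complex.normSq (G 0) + ∑ ξ ∈ Finset.univ.erase 0, Complex.normSq (G ξ) :=
      (Finset.add_sum_erase _ _ (Finset.mem_univ 0)).symm
    have herase : ∑ ξ ∈ Finset.univ.erase 0, Complex.normSq (G ξ)
        ≤ A * (Fintype.card F : ℝ) ^ (d - 2) * S ^ 2 := by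
      calc ∑ ξ ∈ Finset.univ.erase 0, Complex.normSq (G ξ)
          ≤ ∑ ξ ∈ Finset.univ.erase 0, A * (Fintype.card F : ℝ) ^ (d - 2) *
              ∑ p ∈ (V ×ˢ V).filter (fun p => p.1 + p.2 = ξ),
                ‖f p.1‖ ^ 2 * ‖f p.2‖ ^ 2 := by
            refine Finset.sum_le_sum fun ξ hξ => ?_
            refine le_trans (hCS ξ) ?_
            exact mul_le_mul_of_nonneg_right (hVcount ξ (Finset.ne_of_mem_erase hξ))
              (Finset.sum_nonneg fun p _ => by positivity)
        _ = A * (Fintype.card F : ℝ) ^ (d - 2) *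
              ∑ ξ ∈ Finset.univ.erase 0,
                ∑ p ∈ (V ×ˢ V).filter (fun p => p.1 + p.2 = ξ),
                  ‖f p.1‖ ^ 2 * ‖f p.2‖ ^ 2 :=
            (Finset.mul_sum _ _ _).symm
        _ ≤ A * (Fintype.card F : ℝ) ^ (d - 2) *
              ∑ ξ : Fin d → F,
                ∑ p ∈ (V ×ˢ V).filter (fun p => p.1 + p.2 = ξ),
                  ‖f p.1‖ ^ 2 * ‖f p.2‖ ^ 2 := by
            refine mul_le_mul_of_nonneg_left ?_ (by positivity)
            exact Finset.sum_le_sum_of_subset_of_nonneg (Finset.erase_subset _ _)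
              (fun ξ _ _ => Finset.sum_nonneg fun p _ => by positivity)
        _ = A * (Fintype.card F : ℝ) ^ (d - 2) * S ^ 2 := by rw [htot]
    have hone : (1 : ℝ) ≤ (Fintype.card F : ℝ) ^ (d - 2) := one_le_pow₀ hq1
    rw [hsplit]
    nlinarith [hG0, herase, hone, sq_nonneg S]
  -- numeric endgame
  set Q : ℝ := (Fintype.card F : ℝ) ^ (d - 1) with hQdef
  have hqq : (Fintype.card F : ℝ) ^ d * (Fintype.card F : ℝ) ^ (d - 2) = Q ^ 2 := by
    rw [hQdef, ← pow_add, ← pow_mul]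
    congr 1
    omega
  have hXle : (∑ m : Fin d → F,
      ‖(V.card : ℂ)⁻¹ * ∑ x ∈ V, χ (∑ i, m i * x i) * f x‖ ^ 4)
      ≤ (1 + A) / c₁ ^ 2 * (v⁻¹ * S) ^ 2 := by
    rw [hXeq]
    have step1 : v⁻¹ ^ 4 * ((Fintype.card F : ℝ) ^ d * ∑ ξ : Fin d → F, Complex.normSq (G ξ))
        ≤ v⁻¹ ^ 4 * ((Fintype.card F : ℝ) ^ d *
            ((1 + A) * (Fintype.card F : ℝ) ^ (d - 2) * S ^ 2)) := by
      refine mul_le_mul_of_nonneg_left ?_ (by positivity)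
      exact mul_le_mul_of_nonneg_left hC (by positivity)
    refine le_trans step1 ?_
    have e : v⁻¹ ^ 4 * ((Fintype.card F : ℝ) ^ d *
        ((1 + A) * (Fintype.card F : ℝ) ^ (d - 2) * S ^ 2))
        = (1 + A) * S ^ 2 * v⁻¹ ^ 2 * (Q ^ 2 * v⁻¹ ^ 2) := by
      rw [← hqq]; ring
    rw [e]
    have hu : v⁻¹ ≤ (c₁ * Q)⁻¹ := inv_anti₀ (by positivity) hV1
    have hu2 : v⁻¹ ^ 2 ≤ ((c₁ * Q) ⁻¹) ^ 2 :=
      pow_le_pow_left₀ (by positivity) hu 2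
    calc (1 + A) * S ^ 2 * v⁻¹ ^ 2 * (Q ^ 2 * v⁻¹ ^ 2)
        ≤ (1 + A) * S ^ 2 * v⁻¹ ^ 2 * (Q ^ 2 * ((c₁ * Q)⁻¹) ^ 2) := by
          refine mul_le_mul_of_nonneg_left ?_ (by positivity)
          exact mul_le_mul_of_nonneg_left hu2 (by positivity)
      _ = (1 + A) / c₁ ^ 2 * (v⁻¹ * S) ^ 2 := by
          have hQne : Q ≠ 0 := ne_of_gt hQpos
          field_simp
  have hXnn : 0 ≤ (∑ m : Fin d → F,
      ‖(V.card : ℂ)⁻¹ * ∑ x ∈ V, χ (∑ i, m i * x i) * f x‖ ^ 4) :=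
    Finset.sum_nonneg fun m _ => by positivity
  have hYnn : (0:ℝ) ≤ v⁻¹ * S := by positivity
  have hWnn : (0:ℝ) ≤ (v⁻¹ * S) ^ ((1:ℝ)/2) := Real.rpow_nonneg hYnn _
  have hCnn : (0:ℝ) ≤ ((1 + A) / c₁ ^ 2) ^ ((1:ℝ)/4) := Real.rpow_nonneg h1A.le _
  have hC4 : (((1 + A) / c₁ ^ 2) ^ ((1:ℝ)/4)) ^ (4:ℕ) = (1 + A) / c₁ ^ 2 := by
    rw [← Real.rpow_natCast (((1 + A) / c₁ ^ 2) ^ ((1:ℝ)/4)) 4, ← Real.rpow_mul h1A.le]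
    norm_num
  have hW4 : ((v⁻¹ * S) ^ ((1:ℝ)/2)) ^ (4:ℕ) = (v⁻¹ * S) ^ 2 := by
    rw [← Real.rpow_natCast ((v⁻¹ * S) ^ ((1:ℝ)/2)) 4, ← Real.rpow_mul hYnn]
    norm_num
  have hfin : (∑ m : Fin d → F,
      ‖(V.card : ℂ)⁻¹ * ∑ x ∈ V, χ (∑ i, m i * x i) * f x‖ ^ 4)
      ≤ (((1 + A) / c₁ ^ 2) ^ ((1:ℝ)/4) * (v⁻¹ * S) ^ ((1:ℝ)/2)) ^ (4:ℕ) := by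
    rw [mul_pow, hC4, hW4]
    exact hXle
  calc (∑ m : Fin d → F,
      ‖(V.card : ℂ)⁻¹ * ∑ x ∈ V, χ (∑ i, m i * x i) * f x‖ ^ 4) ^ ((1:ℝ)/4)
      ≤ ((((1 + A) / c₁ ^ 2) ^ ((1:ℝ)/4) * (v⁻¹ * S) ^ ((1:ℝ)/2)) ^ (4:ℕ)) ^ ((1:ℝ)/4) :=
        Real.rpow_le_rpow hXnn hfin (by norm_num)
    _ = ((1 + A) / c₁ ^ 2) ^ ((1:ℝ)/4) * (v⁻¹ * S) ^ ((1:ℝ)/2) := by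
        rw [← Real.rpow_natCast (((1 + A) / c₁ ^ 2) ^ ((1:ℝ)/4) * (v⁻¹ * S) ^ ((1:ℝ)/2)) 4,
          ← Real.rpow_mul (by positivity)]
        norm_num
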